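/- Let σ and μ be finite positive Borel measures on ℝ with support contained in [α,β], with σ(ℝ) > 0, let φ and τ be their Markov functions, and let a⁽¹⁾, a⁽²⁾ ∈ ℝ and b > 0 be such that φ(λ) = −1/(a⁽²⁾λ − a⁽¹⁾ + b²(λ − z)(λ − conj(z))τ(λ)) holds for all λ ∈ ℂ with Im λ > 0, where z ∈ ℂ with Im z > 0. Then a⁽²⁾ = (σ(ℝ))^{−1} + b²·μ(ℝ). -/

import Mathlib

open MeasureTheory Filter Complex

-- Key asymptotic: (I y) * ∫ 1/(t - I y) dν → -ν(univ)
lemma key_tendsto (ν : Measure ℝ) [IsFiniteMeasure ν] :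
    Tendsto (fun y : ℝ => (Complex.I * (y : ℂ)) * ∫ t, 1 / ((t : ℂ) - Complex.I * y) ∂ν)
      atTop (nhds (-((ν Set.univ).toReal : ℂ))) := by
  have hrw : ∀ y : ℝ, (Complex.I * (y : ℂ)) * ∫ t, 1 / ((t : ℂ) - Complex.I * y) ∂ν
      = ∫ t, (Complex.I * (y : ℂ)) / ((t : ℂ) - Complex.I * y) ∂ν := by
    intro y
    rw [← integral_const_mul]
    simp [mul_one_div, div_eq_mul_inv]
  simp_rw [hrw]
  have hint : -((ν Set.univ).toReal : ℂ) = ∫ _ : ℝ, (-1 : ℂ) ∂ν := by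
    simp [integral_const, measureReal_def]
  rw [hint]
  apply tendsto_integral_filter_of_dominated_convergence (fun _ => (1 : ℝ))
  · filter_upwards [eventually_gt_atTop (0 : ℝ)] with y hy
    apply Continuous.aestronglyMeasurable
    apply Continuous.div (by continuity) (by continuity)
    intro t ht
    have : ((t : ℂ) - Complex.I * y).im = -y := by simp
    rw [ht] at this
    simp at this
    linarith
  · filter_upwards [eventually_gt_atTop (0 : ℝ)] with y hy
    filter_upwards with t
    have hden : y ≤ ‖(t : ℂ) - Complex.I * y‖ := by
      have := Complex.abs_im_le_norm ((t : ℂ) - Complex.I * y)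
      simp at this
      rwa [abs_of_pos hy] at this
    rw [norm_div]
    rw [div_le_one (by linarith)]
    have : ‖Complex.I * (y : ℂ)‖ = |y| := by simp
    rw [this, abs_of_pos hy]
    · linarith
  · exact integrable_const 1
  · filter_upwards with t
    have h0 : Tendsto (fun y : ℝ => (t : ℂ) / ((t : ℂ) - Complex.I * y)) atTop (nhds 0) := by
      apply squeeze_zero_norm' (a := fun y : ℝ => |t| / y)
      · filter_upwards [eventually_gt_atTop (0 : ℝ)] with y hy
        have hden : y ≤ ‖(t : ℂ) - Complex.I * y‖ := by
          have := Complex.abs_im_le_norm ((t : ℂ) - Complex.I * y)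
          simp at this
          rwa [abs_of_pos hy] at this
        rw [norm_div]
        simp only [Complex.norm_real, Real.norm_eq_abs]
        exact div_le_div_of_nonneg_left (abs_nonneg t) hy hden
      · exact Tendsto.div_atTop tendsto_const_nhds tendsto_id
    have heq : ∀ᶠ y : ℝ in atTop,
        (-1 : ℂ) + (t : ℂ) / ((t : ℂ) - Complex.I * y)
          = (Complex.I * (y : ℂ)) / ((t : ℂ) - Complex.I * y) := by
      filter_upwards [eventually_gt_atTop (0 : ℝ)] with y hy
      have hne : (t : ℂ) - Complex.I * y ≠ 0 := by
        intro hc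
        have : ((t : ℂ) - Complex.I * y).im = 0 := by rw [hc]; simp
        simp at this
        linarith
      field_simp
      try ring
    have := (tendsto_const_nhds (x := (-1 : ℂ)) (f := atTop)).add h0
    rw [add_zero] at this
    exact this.congr' heq

/-- The relation `a⁽²⁾ = (σ(ℝ))⁻¹ + b²·μ(ℝ)` between the coefficients of one
step of the Schur algorithm and the total masses of the measures involved. -/
theorem stmt8 (α β : ℝ) (hαβ : α ≤ β) (σ μ : Measure ℝ)
    [IsFiniteMeasure σ] [IsFiniteMeasure μ]
    (hσsupp : σ (Set.Icc α β)ᶜ = 0) (hμsupp : μ (Set.Icc α β)ᶜ = 0)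
    (hpos : 0 < σ Set.univ)
    (z : ℂ) (hz : 0 < z.im) (a₁ a₂ b : ℝ) (hb : 0 < b)
    (h : ∀ lam : ℂ, 0 < lam.im →
      (∫ t, 1 / ((t : ℂ) - lam) ∂σ) =
        -1 / ((a₂ : ℂ) * lam - (a₁ : ℂ) +
          (b : ℂ) ^ 2 * (lam - z) * (lam - (starRingEnd ℂ) z) *
            ∫ t, 1 / ((t : ℂ) - lam) ∂μ)) :
    a₂ = ((σ Set.univ).toReal)⁻¹ + b ^ 2 * (μ Set.univ).toReal := by
  set S : ℝ := (σ Set.univ).toReal with hSdef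
  set M : ℝ := (μ Set.univ).toReal with hMdef
  have hS : 0 < S := ENNReal.toReal_pos hpos.ne' (measure_ne_top σ _)
  set Φ : ℝ → ℂ := fun y => ∫ t, 1 / ((t : ℂ) - Complex.I * y) ∂σ with hΦdef
  set T : ℝ → ℂ := fun y => ∫ t, 1 / ((t : ℂ) - Complex.I * y) ∂μ with hTdef
  have hΦ : Tendsto (fun y : ℝ => (Complex.I * (y : ℂ)) * Φ y) atTop (nhds (-(S : ℂ))) :=
    key_tendsto σ
  have hT : Tendsto (fun y : ℝ => (Complex.I * (y : ℂ)) * T y) atTop (nhds (-(M : ℂ))) :=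
    key_tendsto μ
  -- (I y)⁻¹ → 0
  have hinv : Tendsto (fun y : ℝ => (Complex.I * (y : ℂ))⁻¹) atTop (nhds 0) := by
    have h1 : Tendsto (fun y : ℝ => ((y⁻¹ : ℝ) : ℂ)) atTop (nhds 0) := by
      have := tendsto_inv_atTop_zero (𝕜 := ℝ)
      exact (Complex.continuous_ofReal.tendsto 0).comp this |>.congr (fun y => rfl)
        |>.congr' (by filter_upwards with y; rfl) |>.mono_left le_rfl |>.congr (fun y => rfl)
        |>.congr (fun y => rfl) |>.mono_right (by norm_num)
    have h2 : ∀ y : ℝ, (Complex.I * (y : ℂ))⁻¹ = Complex.I⁻¹ * ((y⁻¹ : ℝ) : ℂ) := by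
      intro y; rw [mul_inv]; push_cast; ring
    simp_rw [h2]
    have := (tendsto_const_nhds (x := Complex.I⁻¹) (f := atTop (α := ℝ))).mul h1
    simpa using this
  -- T → 0
  have hT0 : Tendsto T atTop (nhds 0) := by
    have : Tendsto (fun y : ℝ => (Complex.I * (y : ℂ))⁻¹ * ((Complex.I * (y : ℂ)) * T y))
        atTop (nhds (0 * (-(M : ℂ)))) := hinv.mul hT
    rw [zero_mul] at this
    apply this.congr'
    filter_upwards [eventually_gt_atTop (0 : ℝ)] with y hy
    have hne : (Complex.I * (y : ℂ)) ≠ 0 := by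
      simp [Complex.ext_iff, hy.ne']
    rw [← mul_assoc, inv_mul_cancel₀ hne, one_mul]
  -- the function D y / (I y)
  set L : ℝ → ℂ := fun y =>
    ((a₂ : ℂ) * (Complex.I * y) - (a₁ : ℂ) +
      (b : ℂ) ^ 2 * (Complex.I * y - z) * (Complex.I * y - (starRingEnd ℂ) z) * T y) *
      (Complex.I * (y : ℂ))⁻¹ with hLdef
  -- limit of L from expansion
  have hL1 : Tendsto L atTop (nhds ((a₂ : ℂ) - (b : ℂ) ^ 2 * (M : ℂ))) := by
    have hG : Tendsto (fun y : ℝ => (a₂ : ℂ) - (a₁ : ℂ) * (Complex.I * (y : ℂ))⁻¹ +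
        (b : ℂ) ^ 2 * ((1 - z * (Complex.I * (y : ℂ))⁻¹) *
          ((Complex.I * (y : ℂ)) * T y - (starRingEnd ℂ) z * T y))) atTop
        (nhds ((a₂ : ℂ) - (a₁ : ℂ) * 0 +
          (b : ℂ) ^ 2 * ((1 - z * 0) * (-(M : ℂ) - (starRingEnd ℂ) z * 0)))) := by
      exact ((tendsto_const_nhds.sub (tendsto_const_nhds.mul hinv)).add
        (tendsto_const_nhds.mul (((tendsto_const_nhds.sub
          (tendsto_const_nhds.mul hinv))).mul (hT.sub (tendsto_const_nhds.mul hT0)))))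
    have hval : (a₂ : ℂ) - (a₁ : ℂ) * 0 +
        (b : ℂ) ^ 2 * ((1 - z * 0) * (-(M : ℂ) - (starRingEnd ℂ) z * 0))
        = (a₂ : ℂ) - (b : ℂ) ^ 2 * (M : ℂ) := by ring
    rw [hval] at hG
    apply hG.congr'
    filter_upwards [eventually_gt_atTop (0 : ℝ)] with y hy
    have hne : (Complex.I * (y : ℂ)) ≠ 0 := by simp [Complex.ext_iff, hy.ne']
    have hy' : (y : ℂ) ≠ 0 := by exact_mod_cast hy.ne'
    rw [hLdef]
    field_simp
  -- limit of L from the functional equation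
  have hL2 : Tendsto L atTop (nhds (-(-(S : ℂ))⁻¹)) := by
    have hR : Tendsto (fun y : ℝ => -((Complex.I * (y : ℂ)) * Φ y)⁻¹) atTop
        (nhds (-(-(S : ℂ))⁻¹)) := by
      have hne : (-(S : ℂ)) ≠ 0 := by
        simp only [neg_ne_zero, Ne, Complex.ofReal_eq_zero]
        exact hS.ne'
      exact (hΦ.inv₀ hne).neg
    apply hR.congr'
    have hev : ∀ᶠ y : ℝ in atTop, (Complex.I * (y : ℂ)) * Φ y ≠ 0 :=
      hΦ.eventually_ne (by
        simp only [neg_ne_zero, Ne, Complex.ofReal_eq_zero]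
        exact hS.ne')
    filter_upwards [eventually_gt_atTop (0 : ℝ), hev] with y hy hΦne
    have hne : (Complex.I * (y : ℂ)) ≠ 0 := by simp [Complex.ext_iff, hy.ne']
    have hΦy : Φ y ≠ 0 := by
      intro hc; apply hΦne; rw [hc, mul_zero]
    have him : (0 : ℝ) < (Complex.I * (y : ℂ)).im := by simpa using hy
    have heq := h (Complex.I * (y : ℂ)) him
    have hD : ((a₂ : ℂ) * (Complex.I * y) - (a₁ : ℂ) +
        (b : ℂ) ^ 2 * (Complex.I * y - z) * (Complex.I * y - (starRingEnd ℂ) z) * T y) ≠ 0 := by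
      intro hc
      rw [hTdef] at hc
      rw [hc] at heq
      simp at heq
      exact hΦy (by rw [hΦdef]; simpa only [one_div] using heq)
    rw [hLdef]
    have heq' : Φ y = -1 / ((a₂ : ℂ) * (Complex.I * y) - (a₁ : ℂ) +
        (b : ℂ) ^ 2 * (Complex.I * y - z) * (Complex.I * y - (starRingEnd ℂ) z) * T y) := heq
    rw [heq']
    field_simp
  have hfin : -(-(S : ℂ))⁻¹ = (a₂ : ℂ) - (b : ℂ) ^ 2 * (M : ℂ) :=
    tendsto_nhds_unique hL2 hL1
  have hre : ((S⁻¹ : ℝ) : ℂ) = ((a₂ - b ^ 2 * M : ℝ) : ℂ) := by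
    push_cast
    rw [← hfin]
    ring
  have := Complex.ofReal_inj.mp hre
  linarith
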